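/- Let q be a prime power, F a finite extension field of GF(q), and let G ∈ F[X] be a separable (squarefree) polynomial. Let α₁, …, αₙ be pairwise distinct elements of F with G(αᵢ) ≠ 0 for all i. Then the q-ary Goppa codes Γ(L, G^{q−1}) and Γ(L, G^q) coincide; that is, for every c ∈ GF(q)ⁿ, G(X)^{q−1} divides Σᵢ cᵢ ∏_{j≠i}(X − αⱼ) in F[X] if and only if G(X)^q divides Σᵢ cᵢ ∏_{j≠i}(X − αⱼ) in F[X]. -/

import Mathlib

open Polynomial

/-- The syndrome polynomial `Σᵢ cᵢ ∏_{j≠i} (X − αⱼ)` of a word `c ∈ GF(q)ⁿ` with respect to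
the locator tuple `α`, with coefficients viewed in the extension field `F`. -/
noncomputable def goppaSum {K F : Type*} [Field K] [Field F] [Algebra K F] {n : ℕ}
    (α : Fin n → F) (c : Fin n → K) : Polynomial F :=
  ∑ i, Polynomial.C (algebraMap K F (c i)) *
    ∏ j ∈ Finset.univ.erase i, (Polynomial.X - Polynomial.C (α j))

open Finset

set_option linter.unusedVariables false

lemma pow_sum_of_frob {E : Type*} [CommRing E] {q : ℕ} (hq : q ≠ 0)
    (hfrob : ∀ x y : E, (x + y) ^ q = x ^ q + y ^ q)
    {ι : Type*} (s : Finset ι) (f : ι → E) :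
    (∑ i ∈ s, f i) ^ q = ∑ i ∈ s, f i ^ q := by
  classical
  induction s using Finset.induction with
  | empty => simp [zero_pow hq]
  | insert _ _ h ih => rw [Finset.sum_insert h, Finset.sum_insert h, hfrob, ih]

lemma goppa_key {E : Type*} [Field E] {q : ℕ} (hq2 : 2 ≤ q)
    (hfrob : ∀ x y : E, (x + y) ^ q = x ^ q + y ^ q)
    {n : ℕ} (α : Fin n → E) (hα : ∀ i, α i ≠ 0)
    (c : Fin n → E) (hc : ∀ i, c i ^ q = c i)
    (hdvd : X ^ (q - 1) ∣ ∑ i, C (c i) * ∏ j ∈ Finset.univ.erase i, (X - C (α j))) :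
    X ^ q ∣ ∑ i, C (c i) * ∏ j ∈ Finset.univ.erase i, (X - C (α j)) := by
  have hq0 : q ≠ 0 := by omega
  set γ : Fin n → E := fun i => (α i)⁻¹ with hγ
  set t : ℕ → E := fun k => ∑ i, c i * γ i ^ (k + 1) with ht
  set P : Fin n → E[X] := fun i => ∏ j ∈ Finset.univ.erase i, (X - C (α j)) with hP
  set Q : Fin n → E[X] := fun i => -(∑ k ∈ Finset.range q, C (γ i ^ (k + 1)) * X ^ k) with hQ
  set h : E[X] := ∏ j, (X - C (α j)) with hh
  have hPh : ∀ i, (X - C (α i)) * P i = h := fun i =>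
    Finset.mul_prod_erase Finset.univ (fun j => X - C (α j)) (Finset.mem_univ i)
  -- key telescoping identity
  have key : ∀ i : Fin n, (X - C (α i)) * Q i = 1 - C (γ i ^ q) * X ^ q := by
    intro i
    have hαγ : α i * γ i = 1 := mul_inv_cancel₀ (hα i)
    have step : ∀ k : ℕ, -((X - C (α i)) * (C (γ i ^ (k + 1)) * X ^ k))
        = C (γ i ^ k) * X ^ k - C (γ i ^ (k + 1)) * X ^ (k + 1) := by
      intro k
      have h1 : α i * γ i ^ (k + 1) = γ i ^ k := by
        rw [pow_succ', ← mul_assoc, hαγ, one_mul]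
      calc -((X - C (α i)) * (C (γ i ^ (k + 1)) * X ^ k))
          = C (α i * γ i ^ (k + 1)) * X ^ k - C (γ i ^ (k + 1)) * X ^ (k + 1) := by
            rw [C_mul]; ring
        _ = C (γ i ^ k) * X ^ k - C (γ i ^ (k + 1)) * X ^ (k + 1) := by rw [h1]
    calc (X - C (α i)) * Q i
        = ∑ k ∈ Finset.range q, -((X - C (α i)) * (C (γ i ^ (k + 1)) * X ^ k)) := by
          rw [hQ, mul_neg, Finset.mul_sum, ← Finset.sum_neg_distrib]
      _ = ∑ k ∈ Finset.range q,
            (C (γ i ^ k) * X ^ k - C (γ i ^ (k + 1)) * X ^ (k + 1)) := by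
          exact Finset.sum_congr rfl fun k _ => step k
      _ = C (γ i ^ 0) * X ^ 0 - C (γ i ^ q) * X ^ q := Finset.sum_range_sub' _ q
      _ = 1 - C (γ i ^ q) * X ^ q := by simp
  -- decomposition
  have decomp : ∑ i, C (c i) * P i
      = h * (∑ i, C (c i) * Q i) + X ^ q * (∑ i, C (c i * γ i ^ q) * P i) := by
    rw [Finset.mul_sum, Finset.mul_sum, ← Finset.sum_add_distrib]
    refine Finset.sum_congr rfl fun i _ => ?_
    have : h * (C (c i) * Q i) = C (c i) * (P i * ((X - C (α i)) * Q i)) := by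
      rw [← hPh i]; ring
    rw [this, key i, C_mul]
    ring
  -- the inner sum is -∑ t k X^k
  have hA : ∑ i, C (c i) * Q i = -(∑ k ∈ Finset.range q, C (t k) * X ^ k) := by
    have hterm : ∀ i : Fin n, C (c i) * Q i
        = -(∑ k ∈ Finset.range q, C (c i * γ i ^ (k + 1)) * X ^ k) := by
      intro i
      rw [hQ, mul_neg, Finset.mul_sum]
      congr 1
      exact Finset.sum_congr rfl fun k _ => by rw [C_mul, mul_assoc]
    calc ∑ i, C (c i) * Q i
        = ∑ i, -(∑ k ∈ Finset.range q, C (c i * γ i ^ (k + 1)) * X ^ k) :=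
          Finset.sum_congr rfl fun i _ => hterm i
      _ = -(∑ i, ∑ k ∈ Finset.range q, C (c i * γ i ^ (k + 1)) * X ^ k) := by
          rw [Finset.sum_neg_distrib]
      _ = -(∑ k ∈ Finset.range q, ∑ i, C (c i * γ i ^ (k + 1)) * X ^ k) := by
          rw [Finset.sum_comm]
      _ = -(∑ k ∈ Finset.range q, C (t k) * X ^ k) := by
          refine congrArg Neg.neg (Finset.sum_congr rfl fun k _ => ?_)
          rw [ht, ← Finset.sum_mul, ← map_sum]
  set A : E[X] := ∑ k ∈ Finset.range q, C (t k) * X ^ k with hAdef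
  set B : E[X] := ∑ i, C (c i * γ i ^ q) * P i with hBdef
  have decomp2 : ∑ i, C (c i) * P i = h * (-A) + X ^ q * B := by
    rw [decomp, hA]
  have hcoeffA : ∀ d, d < q → A.coeff d = t d := by
    intro d hd
    simp only [hAdef, finset_sum_coeff, coeff_C_mul, coeff_X_pow, mul_ite, mul_one, mul_zero]
    rw [Finset.sum_ite_eq (Finset.range q) d t]
    simp [Finset.mem_range, hd]
  rw [decomp2] at hdvd ⊢
  have hXq_dvd_B : X ^ (q - 1) ∣ X ^ q * B := (pow_dvd_pow X (by omega)).mul_right _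
  have h1 : X ^ (q - 1) ∣ h * (-A) := by
    have h2 := dvd_sub hdvd hXq_dvd_B
    simpa using h2
  have hXh : IsCoprime (X : E[X]) h := by
    refine (Polynomial.prime_X.coprime_iff_not_dvd).mpr ?_
    intro hdvdX
    have heval0 : h.eval 0 = 0 := by
      obtain ⟨d, hd⟩ := hdvdX
      rw [hd]; simp
    rw [hh, eval_prod] at heval0
    rcases Finset.prod_eq_zero_iff.mp heval0 with ⟨j, -, hj⟩
    simp only [eval_sub, eval_X, eval_C, zero_sub, neg_eq_zero] at hj
    exact hα j hj
  have hAdvd : X ^ (q - 1) ∣ A := by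
    have := (hXh.pow_left).dvd_of_dvd_mul_left h1
    rwa [dvd_neg] at this
  have hts : ∀ k, k < q - 1 → t k = 0 := by
    intro d hd
    have := (X_pow_dvd_iff.mp hAdvd) d hd
    rwa [hcoeffA d (by omega)] at this
  have ht0 : t 0 = 0 := hts 0 (by omega)
  have htq1 : t (q - 1) = 0 := by
    have hq1 : q - 1 + 1 = q := by omega
    have : t (q - 1) = (t 0) ^ q := by
      rw [ht]
      simp only [hq1]
      rw [pow_sum_of_frob hq0 hfrob]
      refine Finset.sum_congr rfl fun i _ => ?_
      rw [mul_pow, hc i, pow_one]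
    rw [this, ht0, zero_pow hq0]
  have htall : ∀ k, k < q → t k = 0 := by
    intro k hk
    rcases lt_or_ge k (q - 1) with h' | h'
    · exact hts k h'
    · have : k = q - 1 := by omega
      rw [this]; exact htq1
  have hA0 : A = 0 :=
    Finset.sum_eq_zero fun k hk => by
      rw [htall k (Finset.mem_range.mp hk), map_zero, zero_mul]
  rw [hA0, neg_zero, mul_zero, zero_add]
  exact dvd_mul_right _ _

lemma goppa_key_shift {E : Type*} [Field E] {q : ℕ} (hq2 : 2 ≤ q)
    (hfrob : ∀ x y : E, (x + y) ^ q = x ^ q + y ^ q)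
    {n : ℕ} (α : Fin n → E) (β : E) (hβ : ∀ i, α i ≠ β)
    (c : Fin n → E) (hc : ∀ i, c i ^ q = c i)
    (hdvd : (X - C β) ^ (q - 1) ∣ ∑ i, C (c i) * ∏ j ∈ Finset.univ.erase i, (X - C (α j))) :
    (X - C β) ^ q ∣ ∑ i, C (c i) * ∏ j ∈ Finset.univ.erase i, (X - C (α j)) := by
  set S : E[X] := ∑ i, C (c i) * ∏ j ∈ Finset.univ.erase i, (X - C (α j)) with hS
  have hdvdcomp : ∀ (f g p : E[X]), f ∣ g → f.comp p ∣ g.comp p := by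
    rintro f g p ⟨d, rfl⟩
    exact ⟨d.comp p, mul_comp f d p⟩
  have hXcomp : ((X - C β) ^ (q - 1)).comp (X + C β) = X ^ (q - 1) := by
    simp [pow_comp, sub_comp]
  have hScomp : S.comp (X + C β)
      = ∑ i, C (c i) * ∏ j ∈ Finset.univ.erase i, (X - C (α j - β)) := by
    rw [hS, Polynomial.sum_comp]
    refine Finset.sum_congr rfl fun i _ => ?_
    rw [mul_comp, C_comp, Polynomial.prod_comp]
    refine congrArg _ (Finset.prod_congr rfl fun j _ => ?_)
    rw [sub_comp, X_comp, C_comp, map_sub]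
    ring
  have h1 : X ^ (q - 1) ∣ S.comp (X + C β) := by
    have := hdvdcomp _ _ (X + C β) hdvd
    rwa [hXcomp] at this
  rw [hScomp] at h1
  have h2 : X ^ q ∣ S.comp (X + C β) := by
    rw [hScomp]
    exact goppa_key hq2 hfrob (fun j => α j - β) (fun j => sub_ne_zero.mpr (hβ j)) c hc h1
  have h3 := hdvdcomp _ _ (X - C β) h2
  have hXq : (X ^ q : E[X]).comp (X - C β) = (X - C β) ^ q := by
    simp [pow_comp]
  have hback : (S.comp (X + C β)).comp (X - C β) = S := by
    rw [comp_assoc]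
    simp [add_comp, sub_comp]
  rwa [hXq, hback] at h3

theorem goppa_code_sep_pow_q_eq_pow_q_sub_one {K F : Type*} [Field K] [Fintype K]
    [Field F] [Fintype F] [Algebra K F] {n : ℕ}
    (G : Polynomial F) (hsq : Squarefree G)
    (α : Fin n → F) (hα : Function.Injective α)
    (heval : ∀ i, G.eval (α i) ≠ 0)
    (c : Fin n → K) :
    (G ^ (Fintype.card K - 1) ∣ goppaSum α c) ↔
      (G ^ (Fintype.card K) ∣ goppaSum α c) := by
  classical
  constructor
  case mpr =>
    exact fun hdvd => (pow_dvd_pow G (Nat.sub_le _ 1)).trans hdvd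
  intro hdvd
  set q := Fintype.card K with hqdef
  have hq2 : 2 ≤ q := Fintype.one_lt_card
  have hq0 : q ≠ 0 := by omega
  set p := ringChar K with hpdef
  have hpprime : p.Prime := CharP.char_is_prime K p
  haveI : Fact p.Prime := ⟨hpprime⟩
  obtain ⟨m, -, hcard⟩ := FiniteField.card K p
  set E := AlgebraicClosure F with hE
  set φ : F →+* E := algebraMap F E with hφ
  haveI hpF : CharP F p := charP_of_injective_ringHom (algebraMap K F).injective p
  haveI hpE : CharP E p := charP_of_injective_ringHom φ.injective p
  have hfrob : ∀ x y : E, (x + y) ^ q = x ^ q + y ^ q := by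
    intro x y
    rw [hqdef, hcard]
    exact add_pow_char_pow x y p m
  set S := goppaSum α c with hSdef
  have hGne : G ≠ 0 := hsq.ne_zero
  have hlcne : G.leadingCoeff ≠ 0 := leadingCoeff_ne_zero.mpr hGne
  set GE := G.map φ with hGEdef
  have hGEne : GE ≠ 0 := (Polynomial.map_ne_zero_iff φ.injective).mpr hGne
  have hsep : G.Separable := PerfectField.separable_iff_squarefree.mpr hsq
  have hsepE : GE.Separable := hsep.map
  have hnodup : GE.roots.Nodup := nodup_roots hsepE
  set α' : Fin n → E := fun i => φ (α i) with hα'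
  set c' : Fin n → E := fun i => φ (algebraMap K F (c i)) with hc'
  have hcq : ∀ i, c' i ^ q = c' i := by
    intro i
    rw [hc', ← map_pow, ← map_pow, FiniteField.pow_card]
  have hSmap : S.map φ = ∑ i, C (c' i) * ∏ j ∈ Finset.univ.erase i, (X - C (α' j)) := by
    rw [hSdef, goppaSum]
    simp only [Polynomial.map_sum, Polynomial.map_mul, Polynomial.map_prod,
      Polynomial.map_sub, Polynomial.map_C, Polynomial.map_X, hα', hc']
  -- the mapped divisibility hypothesis
  have hdvdE : GE ^ (q - 1) ∣ S.map φ := by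
    have h1 := map_dvd (mapRingHom φ) hdvd
    simpa only [coe_mapRingHom, Polynomial.map_pow] using h1
  -- per-root divisibility in E
  have hroot : ∀ β ∈ GE.roots.toFinset, (X - C β) ^ q ∣ S.map φ := by
    intro β hβmem
    rw [Multiset.mem_toFinset] at hβmem
    have hβroot : GE.IsRoot β := isRoot_of_mem_roots hβmem
    have hXβ : (X - C β) ∣ GE := dvd_iff_isRoot.mpr hβroot
    have hd1 : (X - C β) ^ (q - 1) ∣ S.map φ :=
      dvd_trans (pow_dvd_pow_of_dvd hXβ (q - 1)) hdvdE
    have hβα : ∀ i, α' i ≠ β := by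
      intro i heq
      have h0 : GE.eval (α' i) = 0 := by rw [heq]; exact hβroot
      rw [hα', hGEdef, eval_map, eval₂_at_apply] at h0
      exact heval i ((_root_.map_eq_zero φ).mp h0)
    rw [hSmap] at hd1 ⊢
    exact goppa_key_shift hq2 hfrob α' β hβα c' hcq hd1
  -- combine coprime powers
  have hpair : (↑GE.roots.toFinset : Set E).Pairwise
      (Function.onFun IsCoprime fun β => (X - C β) ^ q) := by
    intro a _ b _ hab
    exact ((pairwise_coprime_X_sub_C (Function.injective_id : Function.Injective
      (id : E → E))) hab).pow
  have hproddvd : (∏ β ∈ GE.roots.toFinset, (X - C β) ^ q) ∣ S.map φ :=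
    Finset.prod_dvd_of_coprime hpair (fun β hβ => hroot β hβ)
  -- GE^q is a unit multiple of that product
  have hsplit : GE = C GE.leadingCoeff * (GE.roots.map fun a => X - C a).prod :=
    (IsAlgClosed.splits GE).eq_prod_roots
  have hprodset : (GE.roots.map fun a => X - C a).prod
      = ∏ β ∈ GE.roots.toFinset, (X - C β) := by
    rw [Finset.prod_eq_multiset_prod]
    congr 1
    rw [Multiset.toFinset_val, Multiset.dedup_eq_self.mpr hnodup]
  have hGEq : GE ^ q ∣ S.map φ := by
    have heq : GE ^ q = C (GE.leadingCoeff ^ q) * ∏ β ∈ GE.roots.toFinset, (X - C β) ^ q := by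
      conv_lhs => rw [hsplit]
      rw [mul_pow, ← C_pow, hprodset, ← Finset.prod_pow]
    rw [heq]
    exact ((isUnit_C.mpr (isUnit_iff_ne_zero.mpr
      (pow_ne_zero q (leadingCoeff_ne_zero.mpr hGEne)))).mul_left_dvd).mpr hproddvd
  -- descend to F
  set G0 := G * C G.leadingCoeff⁻¹ with hG0
  have hmonic : G0.Monic := monic_mul_leadingCoeff_inv hGne
  have huF : IsUnit (C G.leadingCoeff⁻¹ : F[X]) :=
    isUnit_C.mpr (isUnit_iff_ne_zero.mpr (inv_ne_zero hlcne))
  have hassoc : Associated G G0 := associated_mul_unit_right G _ huF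
  have hG0map : (G0 ^ q).map φ ∣ S.map φ := by
    have hmapeq : (G0 ^ q).map φ = C (φ (G.leadingCoeff⁻¹ ^ q)) * GE ^ q := by
      rw [hG0]
      simp only [Polynomial.map_pow, Polynomial.map_mul, Polynomial.map_C, ← hGEdef]
      rw [mul_pow, ← C_pow, ← map_pow]
      ring
    rw [hmapeq]
    exact ((isUnit_C.mpr (isUnit_iff_ne_zero.mpr (by
      simpa using pow_ne_zero q (inv_ne_zero hlcne) : φ (G.leadingCoeff⁻¹ ^ q) ≠ 0))).mul_left_dvd).mpr hGEq
  have hG0dvd : G0 ^ q ∣ S := (map_dvd_map φ φ.injective (hmonic.pow q)).mp hG0map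
  exact (hassoc.pow_pow.dvd_iff_dvd_left).mpr hG0dvd
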